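/- For any $u_0 \in S^n$ and $\varepsilon > 0$, the set of reflections $\{R_u : u \in S^n, \|u - u_0\| < \varepsilon\}$ generates the full orthogonal group $O(n+1)$, where $R_u x = x - 2(x\cdot u)u$ is the reflection with respect to the hyperplane $u^\perp$. -/

import Mathlib

open Metric Set
open scoped RealInnerProductSpace

noncomputable section

section Aux

open Submodule

variable {E : Type*} [NormedAddCommGroup E] [InnerProductSpace ℝ E]

lemma stmt8_refl_formula {u : E} (hu : ‖u‖ = 1) (x : E) :
    reflection (ℝ ∙ u)ᗮ x = x - (2 * ⟪x, u⟫) • u := by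
  rw [reflection_orthogonal_apply, reflection_singleton_apply, hu, real_inner_comm]
  push_cast
  simp only [one_pow, div_one, two_smul, two_mul, add_smul]
  abel

lemma stmt8_refl_conj (A : E ≃ₗᵢ[ℝ] E) {u : E} (hu : ‖u‖ = 1) :
    reflection (ℝ ∙ (A u))ᗮ = A * reflection (ℝ ∙ u)ᗮ * A⁻¹ := by
  have hAu : ‖A u‖ = 1 := by rw [A.norm_map]; exact hu
  ext x
  have h1 : (A * reflection (ℝ ∙ u)ᗮ * A⁻¹) x = A (reflection (ℝ ∙ u)ᗮ (A.symm x)) := rfl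
  rw [stmt8_refl_formula hAu, h1, stmt8_refl_formula hu, map_sub, map_smul]
  have h2 : ⟪A.symm x, u⟫ = ⟪x, A u⟫ := by
    conv_rhs => rw [← A.apply_symm_apply x]
    rw [A.inner_map_map]
  rw [h2, A.apply_symm_apply]

theorem stmt8_main [FiniteDimensional ℝ E] (u₀ : E) (hu₀ : ‖u₀‖ = 1)
    (ε : ℝ) (hε : 0 < ε) :
    Subgroup.closure
      {A : E ≃ₗᵢ[ℝ] E | ∃ u : E, ‖u‖ = 1 ∧ ‖u - u₀‖ < ε ∧
        ∀ x, A x = x - (2 * ⟪x, u⟫) • u} = ⊤ := by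
  set H : Subgroup (E ≃ₗᵢ[ℝ] E) := Subgroup.closure
      {A : E ≃ₗᵢ[ℝ] E | ∃ u : E, ‖u‖ = 1 ∧ ‖u - u₀‖ < ε ∧
        ∀ x, A x = x - (2 * ⟪x, u⟫) • u} with hH
  -- generators
  have hgen : ∀ u : E, ‖u‖ = 1 → ‖u - u₀‖ < ε → reflection (ℝ ∙ u)ᗮ ∈ H := fun u h1 h2 =>
    Subgroup.subset_closure ⟨u, h1, h2, stmt8_refl_formula h1⟩
  have hu₀H : reflection (ℝ ∙ u₀)ᗮ ∈ H := hgen u₀ hu₀ (by simpa using hε)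
  -- the orbit of u₀ under H
  set O : Set E := {w | ∃ A ∈ H, A u₀ = w} with hO
  have hu₀O : u₀ ∈ O := ⟨1, one_mem H, rfl⟩
  obtain ⟨δ, hδ⟩ : ∃ δ : ℝ, δ = min ε 1 := ⟨_, rfl⟩
  have hδpos : 0 < δ := hδ ▸ lt_min hε one_pos
  have hδε : δ ≤ ε := hδ ▸ min_le_left _ _
  have hδ1 : δ ≤ 1 := hδ ▸ min_le_right _ _
  -- the key step: the orbit is δ-stable
  have step : ∀ p ∈ O, ∀ q : E, ‖q‖ = 1 → ‖q - p‖ < δ → q ∈ O := by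
    rintro p ⟨A, hA, rfl⟩ q hq hqp
    obtain ⟨u, hu⟩ : ∃ u : E, u = A.symm q := ⟨_, rfl⟩
    have hu1 : ‖u‖ = 1 := by rw [hu, A.symm.norm_map]; exact hq
    have huu₀ : ‖u - u₀‖ < δ := by
      have h3 : u - u₀ = A.symm (q - A u₀) := by rw [map_sub, hu, A.symm_apply_apply]
      rw [h3, A.symm.norm_map]; exact hqp
    -- the bisector direction
    have hsum_sq : ‖u + u₀‖ ^ 2 + ‖u - u₀‖ ^ 2 = 4 := by
      rw [norm_add_sq_real, norm_sub_sq_real, hu1, hu₀]; ring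
    have hsumpos : 0 < ‖u + u₀‖ := by
      nlinarith [norm_nonneg (u + u₀), norm_nonneg (u - u₀)]
    have hne : u + u₀ ≠ 0 := by
      intro h; rw [h, norm_zero] at hsumpos; exact lt_irrefl 0 hsumpos
    obtain ⟨a, ha⟩ : ∃ a : E, a = ‖u + u₀‖⁻¹ • (u + u₀) := ⟨_, rfl⟩
    have ha1 : ‖a‖ = 1 := ha ▸ norm_smul_inv_norm hne
    have hinner_a : ⟪a, u₀⟫ = ‖u + u₀‖ / 2 := by
      rw [ha, real_inner_smul_left, inner_add_left]
      have h1 : ⟪u, u₀⟫ = (‖u + u₀‖ ^ 2 - 2) / 2 := by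
        have h2 := norm_add_sq_real u u₀; rw [hu1, hu₀] at h2; nlinarith [h2]
      rw [h1, real_inner_self_eq_norm_sq u₀, hu₀]
      field_simp
      nlinarith [hsumpos]
    have haε : ‖a - u₀‖ < ε := by
      have hsq : ‖a - u₀‖ ^ 2 = 2 - ‖u + u₀‖ := by
        rw [norm_sub_sq_real, ha1, hu₀, hinner_a]; ring
      have hlt : ‖a - u₀‖ ^ 2 < ε ^ 2 := by
        rw [hsq]
        nlinarith [norm_nonneg (u - u₀), hsumpos, huu₀, hδε, hδ1, hε, hsum_sq]
      exact lt_of_pow_lt_pow_left₀ 2 (le_of_lt hε) hlt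
    -- the reflection in `a` sends `u₀` to `-u`
    have hRa : reflection (ℝ ∙ a)ᗮ u₀ = -u := by
      have hspan : (ℝ ∙ a) = ℝ ∙ (u₀ - (-u)) := by
        have h4 : u₀ - (-u) = u + u₀ := by abel
        rw [h4, ha]
        exact Submodule.span_singleton_smul_eq
          (IsUnit.mk0 _ (inv_ne_zero hsumpos.ne')) _
      simp only [hspan]
      exact reflection_sub (by rw [hu₀, norm_neg, hu1])
    have hBmem : reflection (ℝ ∙ a)ᗮ * reflection (ℝ ∙ u₀)ᗮ ∈ H :=
      mul_mem (hgen a ha1 haε) hu₀H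
    have hBu₀ : (reflection (ℝ ∙ a)ᗮ * reflection (ℝ ∙ u₀)ᗮ) u₀ = u := by
      have h1 : (reflection (ℝ ∙ a)ᗮ * reflection (ℝ ∙ u₀)ᗮ) u₀
          = reflection (ℝ ∙ a)ᗮ (reflection (ℝ ∙ u₀)ᗮ u₀) := rfl
      rw [h1, reflection_orthogonalComplement_singleton_eq_neg, map_neg, hRa, neg_neg]
    exact ⟨A * (reflection (ℝ ∙ a)ᗮ * reflection (ℝ ∙ u₀)ᗮ), mul_mem hA hBmem, by
      show A ((reflection (ℝ ∙ a)ᗮ * reflection (ℝ ∙ u₀)ᗮ) u₀) = q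
      rw [hBu₀, hu, A.apply_symm_apply]⟩
  -- every unit vector is in the orbit
  have hsphere : ∀ w : E, ‖w‖ = 1 → w ∈ O := by
    have hu₀ne : u₀ ≠ 0 := by
      intro h; rw [h, norm_zero] at hu₀; norm_num at hu₀
    rcases eq_or_lt_of_le (Nat.succ_le_of_lt (Module.finrank_pos_iff.mpr ⟨⟨u₀, 0, hu₀ne⟩⟩) :
        1 ≤ Module.finrank ℝ E) with hfr | hfr
    · -- dimension 1: the sphere is {u₀, -u₀}
      intro w hw
      obtain ⟨c, hc⟩ := (finrank_eq_one_iff_of_nonzero' u₀ hu₀ne).mp hfr.symm w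
      have hcabs : |c| = 1 := by
        have h5 := congr_arg norm hc
        rwa [norm_smul, hu₀, mul_one, hw, Real.norm_eq_abs] at h5
      rcases abs_eq (by norm_num : (0:ℝ) ≤ 1) |>.mp hcabs with h1 | h1
      · rw [← hc, h1, one_smul]; exact hu₀O
      · refine ⟨reflection (ℝ ∙ u₀)ᗮ, hu₀H, ?_⟩
        rw [reflection_orthogonalComplement_singleton_eq_neg, ← hc, h1, neg_one_smul]
    · -- dimension ≥ 2: connectedness of the sphere
      have hrank : 1 < Module.rank ℝ E := by
        rw [← Module.finrank_eq_rank]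
        exact_mod_cast hfr
      have hpre : IsPreconnected (sphere (0 : E) 1) := isPreconnected_sphere hrank 0 1
      obtain ⟨U, hU⟩ : ∃ U : Set E, U = ⋃ p ∈ O, ball p (δ / 2) := ⟨_, rfl⟩
      have hUopen : IsOpen U := hU ▸ isOpen_biUnion fun _ _ => isOpen_ball
      have hUO : ∀ w : E, ‖w‖ = 1 → w ∈ U → w ∈ O := by
        intro w hw hwU
        rw [hU] at hwU
        obtain ⟨p, hpO, hwp⟩ := mem_iUnion₂.1 hwU
        exact step p hpO w hw (by
          rw [← dist_eq_norm]; exact lt_of_lt_of_le hwp (by linarith))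
      have hne2 : (sphere (0 : E) 1 ∩ U).Nonempty :=
        ⟨u₀, by rwa [mem_sphere_zero_iff_norm],
          hU ▸ mem_biUnion hu₀O (mem_ball_self (by positivity))⟩
      have hcl : closure U ∩ sphere (0 : E) 1 ⊆ U := by
        rintro w ⟨hwc, hws⟩
        obtain ⟨y, hyU, hwy⟩ := Metric.mem_closure_iff.1 hwc (δ / 2) (by positivity)
        rw [hU] at hyU
        obtain ⟨p, hpO, hyp⟩ := mem_iUnion₂.1 hyU
        have hwp : ‖w - p‖ < δ := by
          rw [← dist_eq_norm]
          calc dist w p ≤ dist w y + dist y p := dist_triangle _ _ _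
            _ < δ / 2 + δ / 2 := add_lt_add hwy hyp
            _ = δ := by ring
        have hwO : w ∈ O := step p hpO w (mem_sphere_zero_iff_norm.mp hws) hwp
        exact hU ▸ mem_biUnion hwO (mem_ball_self (by positivity))
      have hsub := hpre.subset_of_closure_inter_subset hUopen hne2 hcl
      intro w hw
      exact hUO w hw (hsub (mem_sphere_zero_iff_norm.mpr hw))
  -- hence all reflections are in H
  have hrefl : ∀ v : E, reflection (ℝ ∙ v)ᗮ ∈ H := by
    intro v
    rcases eq_or_ne v 0 with rfl | hv
    · have h0 : reflection (ℝ ∙ (0 : E))ᗮ = 1 := by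
        ext x
        refine reflection_mem_subspace_eq_self ?_
        rw [Submodule.span_zero_singleton, Submodule.bot_orthogonal_eq_top]
        exact Submodule.mem_top
      rw [h0]; exact one_mem H
    · have hw1 : ‖(‖v‖⁻¹ • v : E)‖ = 1 := norm_smul_inv_norm hv
      obtain ⟨A, hA, hAw⟩ := hsphere (‖v‖⁻¹ • v) hw1
      have hspan : (ℝ ∙ v) = ℝ ∙ (A u₀) := by
        rw [hAw]
        exact (Submodule.span_singleton_smul_eq
          (IsUnit.mk0 _ (inv_ne_zero (norm_ne_zero_iff.mpr hv))) v).symm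
      simp only [hspan]
      rw [stmt8_refl_conj A hu₀]
      exact mul_mem (mul_mem hA hu₀H) (inv_mem hA)
  -- conclude via Cartan–Dieudonné
  rw [hH, eq_top_iff, ← LinearIsometryEquiv.reflections_generate (F := E)]
  refine (Subgroup.closure_le _).mpr ?_
  rintro A ⟨v, rfl⟩
  exact hrefl v

end Aux

/-- For any `u₀ ∈ Sⁿ` and `ε > 0`, the reflections `R_u x = x - 2(x·u)u` with `u ∈ Sⁿ`,
`‖u - u₀‖ < ε`, generate the full orthogonal group `O(n+1)` (realized as the group of
linear isometric equivalences of `ℝ^{n+1}`). -/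
theorem stmt_8 (n : ℕ) (u₀ : EuclideanSpace ℝ (Fin (n + 1))) (hu₀ : ‖u₀‖ = 1)
    (ε : ℝ) (hε : 0 < ε) :
    Subgroup.closure
      {A : EuclideanSpace ℝ (Fin (n + 1)) ≃ₗᵢ[ℝ] EuclideanSpace ℝ (Fin (n + 1)) |
        ∃ u : EuclideanSpace ℝ (Fin (n + 1)), ‖u‖ = 1 ∧ ‖u - u₀‖ < ε ∧
          ∀ x, A x = x - (2 * ⟪x, u⟫) • u} = ⊤ :=
  stmt8_main u₀ hu₀ ε hε
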